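/- Let u be a convex function on ℝⁿ, and let T = ∇u wherever differentiable. If ∇u pushes a finite measure μ forward to ν, and v is another convex function with ∇v also pushing μ to ν, and both are optimal for the quadratic cost, then ∇u = ∇v μ-a.e. (uniqueness of the optimal map / Brenier map). -/

import Mathlib

open MeasureTheory Set

open scoped RealInnerProductSpace

section Aux

variable {F : Type*} [NormedAddCommGroup F] [InnerProductSpace ℝ F] [CompleteSpace F]

/-- Derivative of a convex function along a line through `x`. -/
lemma hasDerivAt_line {u : F → ℝ} {p x : F} (h : HasGradientAt u p x) (d : F) :
    HasDerivAt (fun t : ℝ => u (x + t • d)) ⟪p, d⟫ 0 := by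
  have hL : HasDerivAt (fun t : ℝ => x + t • d) d 0 := by
    simpa using ((hasDerivAt_id (0 : ℝ)).smul_const d).const_add x
  have h0 : x + (0 : ℝ) • d = x := by simp
  have hf : HasFDerivAt u (InnerProductSpace.toDual ℝ F p) (x + (0 : ℝ) • d) := by
    rw [h0]; exact h.hasFDerivAt
  have := hf.comp_hasDerivAt (0 : ℝ) hL
  simp at this
  exact this

/-- The gradient of a convex function is a subgradient. -/
lemma grad_subgrad {u : F → ℝ} (hu : ConvexOn ℝ univ u) {p x : F}
    (h : HasGradientAt u p x) (z : F) : u x + ⟪p, z - x⟫ ≤ u z := by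
  set d := z - x with hd
  have hline := hasDerivAt_line h d
  have key : ⟪p, d⟫ ≤ u z - u x := by
    have htend : Filter.Tendsto (slope (fun t : ℝ => u (x + t • d)) 0)
        (nhdsWithin 0 (Ioi (0:ℝ))) (nhds ⟪p, d⟫) := by
      refine (hasDerivAt_iff_tendsto_slope.1 hline).mono_left (nhdsWithin_mono _ ?_)
      intro t ht
      exact ne_of_gt ht
    refine le_of_tendsto htend ?_
    filter_upwards [Ioc_mem_nhdsGT (zero_lt_one (α := ℝ))] with t ht
    have ht0 : 0 < t := ht.1
    have ht1 : t ≤ 1 := ht.2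
    have hconv : u ((1 - t) • x + t • z) ≤ (1 - t) * u x + t * u z :=
      hu.2 (mem_univ x) (mem_univ z) (by linarith) (le_of_lt ht0) (by ring)
    have hpt : (1 - t) • x + t • z = x + t • d := by
      rw [hd, smul_sub, sub_smul]; module
    rw [slope_def_field]
    have hval : u (x + t • d) ≤ u x + t * (u z - u x) := by
      rw [← hpt]; calc u ((1 - t) • x + t • z) ≤ (1 - t) * u x + t * u z := hconv
        _ = u x + t * (u z - u x) := by ring
    have h00 : u (x + (0:ℝ) • d) = u x := by simp
    rw [h00, sub_zero, div_le_iff₀ ht0]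
    nlinarith [hval]
  have : ⟪p, z - x⟫ ≤ u z - u x := by rwa [← hd]
  linarith

/-- A subgradient at a differentiability point equals the gradient. -/
lemma subgrad_eq_grad {u : F → ℝ} {p q x : F} (h : HasGradientAt u p x)
    (hq : ∀ z, u x + ⟪q, z - x⟫ ≤ u z) : q = p := by
  set d := q - p with hd
  have hline := hasDerivAt_line h d
  have key : ⟪q, d⟫ ≤ ⟪p, d⟫ := by
    have htend : Filter.Tendsto (slope (fun t : ℝ => u (x + t • d)) 0)
        (nhdsWithin 0 (Ioi (0:ℝ))) (nhds ⟪p, d⟫) := by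
      refine (hasDerivAt_iff_tendsto_slope.1 hline).mono_left (nhdsWithin_mono _ ?_)
      intro t ht
      exact ne_of_gt ht
    refine ge_of_tendsto htend ?_
    filter_upwards [self_mem_nhdsWithin] with t ht
    have ht0 : (0:ℝ) < t := ht
    have := hq (x + t • d)
    have hinner : ⟪q, (x + t • d) - x⟫ = t * ⟪q, d⟫ := by
      simp [real_inner_smul_right]
    rw [hinner] at this
    rw [slope_def_field]
    have h00 : u (x + (0:ℝ) • d) = u x := by simp
    rw [h00, sub_zero, le_div_iff₀ ht0]
    linarith
  have hle : ⟪q - p, q - p⟫ ≤ 0 := by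
    rw [← hd, inner_sub_left]
    linarith
  have := real_inner_self_nonpos.1 hle
  exact sub_eq_zero.1 this

end Aux

/-- If `X ≤ Y` a.e. and they have the same upper tail measures, then `X = Y` a.e. -/
lemma ae_eq_of_ae_le_of_tail_eq {α : Type*} [MeasurableSpace α] {μ : Measure α}
    [IsFiniteMeasure μ] {X Y : α → ℝ} (hXm : AEMeasurable X μ) (hYm : AEMeasurable Y μ)
    (hle : ∀ᵐ a ∂μ, X a ≤ Y a)
    (heq : ∀ t : ℝ, μ {a | t < X a} = μ {a | t < Y a}) : X =ᵐ[μ] Y := by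
  set X' := hXm.mk X with hX'
  set Y' := hYm.mk Y with hY'
  have hXX' : X =ᵐ[μ] X' := hXm.ae_eq_mk
  have hYY' : Y =ᵐ[μ] Y' := hYm.ae_eq_mk
  have hle' : ∀ᵐ a ∂μ, X' a ≤ Y' a := by
    filter_upwards [hle, hXX', hYY'] with a h1 h2 h3
    rw [← h2, ← h3]; exact h1
  have heq' : ∀ t : ℝ, μ {a | t < X' a} = μ {a | t < Y' a} := by
    intro t
    have e1 : {a | t < X a} =ᵐ[μ] {a | t < X' a} := by
      filter_upwards [hXX'] with a h2
      show (t < X a) = (t < X' a)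
      rw [h2]
    have e2 : {a | t < Y a} =ᵐ[μ] {a | t < Y' a} := by
      filter_upwards [hYY'] with a h2
      show (t < Y a) = (t < Y' a)
      rw [h2]
    rw [← measure_congr e1, ← measure_congr e2]
    exact heq t
  have hnull : ∀ q : ℚ, μ ({a | (q:ℝ) < Y' a} \ {a | (q:ℝ) < X' a}) = 0 := by
    intro q
    set A := {a | (q:ℝ) < X' a} with hA
    set B := {a | (q:ℝ) < Y' a} with hB
    have hAm : MeasurableSet A := measurableSet_lt measurable_const hXm.measurable_mk
    have hBm : MeasurableSet B := measurableSet_lt measurable_const hYm.measurable_mk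
    have hAB : μ (A \ B) = 0 := by
      have hsub : (A \ B) ⊆ {a | ¬ (X' a ≤ Y' a)} := by
        intro a ha
        simp only [hA, hB, Set.mem_diff, Set.mem_setOf_eq, not_lt] at ha
        simp only [Set.mem_setOf_eq, not_le]
        exact lt_of_le_of_lt ha.2 ha.1
      exact measure_mono_null hsub hle'
    have hIA : μ (A ∩ B) = μ A := by
      have : μ A = μ (A ∩ B) + μ (A \ B) := (measure_inter_add_diff A hBm).symm
      rw [hAB, add_zero] at this
      exact this.symm
    have hBsplit : μ B = μ (A ∩ B) + μ (B \ A) := by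
      rw [Set.inter_comm]
      exact (measure_inter_add_diff B hAm).symm
    rw [hIA, ← heq' q] at hBsplit
    have hfin : μ A ≠ ⊤ := measure_ne_top μ A
    have : μ A = μ A + μ (B \ A) := by rw [← hBsplit, heq' q]
    exact (ENNReal.add_right_inj hfin).mp (by rw [← this, add_zero] ) |>.symm
  have hnot : ∀ᵐ a ∂μ, ¬ X' a < Y' a := by
    have hU : μ (⋃ q : ℚ, ({a | (q:ℝ) < Y' a} \ {a | (q:ℝ) < X' a})) = 0 :=
      measure_iUnion_null hnull
    rw [ae_iff]
    simp only [not_not]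
    refine measure_mono_null ?_ hU
    intro a ha
    have ha' : X' a < Y' a := ha
    obtain ⟨q, hq1, hq2⟩ := exists_rat_btwn ha'
    exact Set.mem_iUnion.2 ⟨q, ⟨hq2, by simpa using not_lt.2 hq1.le⟩⟩
  have : X' =ᵐ[μ] Y' := by
    filter_upwards [hle', hnot] with a h1 h2
    exact le_antisymm h1 (not_lt.1 h2)
  exact hXX'.trans (this.trans hYY'.symm)

/-- Uniqueness of the Brenier map: if the gradients of two convex functions both
push `μ` (absolutely continuous, finite) forward to `ν`, they agree `μ`-a.e. -/
theorem brenier_map_unique {n : ℕ}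
    (μ ν : Measure (EuclideanSpace ℝ (Fin n)))
    [IsFiniteMeasure μ] [IsFiniteMeasure ν]
    (hac : μ ≪ (volume : Measure (EuclideanSpace ℝ (Fin n))))
    (u v : EuclideanSpace ℝ (Fin n) → ℝ)
    (hu : ConvexOn ℝ univ u) (hv : ConvexOn ℝ univ v)
    (Gu Gv : EuclideanSpace ℝ (Fin n) → EuclideanSpace ℝ (Fin n))
    (hGu : ∀ᵐ x ∂μ, HasGradientAt u (Gu x) x)
    (hGv : ∀ᵐ x ∂μ, HasGradientAt v (Gv x) x)
    (hGum : AEMeasurable Gu μ) (hGvm : AEMeasurable Gv μ)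
    (hpushu : Measure.map Gu μ = ν) (hpushv : Measure.map Gv μ = ν) :
    Gu =ᵐ[μ] Gv := by
  classical
  -- Legendre transforms, `EReal`-valued
  set us : EuclideanSpace ℝ (Fin n) → EReal :=
    fun y => ⨆ z, ((⟪z, y⟫ - u z : ℝ) : EReal) with hus_def
  set vs : EuclideanSpace ℝ (Fin n) → EReal :=
    fun y => ⨆ z, ((⟪z, y⟫ - v z : ℝ) : EReal) with hvs_def
  have hus_meas : Measurable us := by
    refine LowerSemicontinuous.measurable (lowerSemicontinuous_iSup fun z => ?_)
    exact (continuous_coe_real_ereal.comp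
      ((continuous_const.inner continuous_id).sub continuous_const)).lowerSemicontinuous
  have hvs_meas : Measurable vs := by
    refine LowerSemicontinuous.measurable (lowerSemicontinuous_iSup fun z => ?_)
    exact (continuous_coe_real_ereal.comp
      ((continuous_const.inner continuous_id).sub continuous_const)).lowerSemicontinuous
  -- Fenchel-Young inequality
  have fen_u : ∀ y z, ((⟪z, y⟫ - u z : ℝ) : EReal) ≤ us y := fun y z => by
    simp only [hus_def]
    exact le_iSup (fun w => (((⟪w, y⟫ - u w : ℝ)) : EReal)) z
  have fen_v : ∀ y z, ((⟪z, y⟫ - v z : ℝ) : EReal) ≤ vs y := fun y z => by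
    simp only [hvs_def]
    exact le_iSup (fun w => (((⟪w, y⟫ - v w : ℝ)) : EReal)) z
  have hbot_u : ∀ y, us y ≠ ⊥ := fun y =>
    ((EReal.bot_lt_coe _).trans_le (fen_u y 0)).ne'
  have hbot_v : ∀ y, vs y ≠ ⊥ := fun y =>
    ((EReal.bot_lt_coe _).trans_le (fen_v y 0)).ne'
  -- Fenchel equality at gradient points
  have hU1 : ∀ᵐ x ∂μ, us (Gu x) = ((⟪x, Gu x⟫ - u x : ℝ) : EReal) := by
    filter_upwards [hGu] with x hx
    simp only [hus_def]
    refine le_antisymm (iSup_le fun z => ?_)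
      (le_iSup (fun z => (((⟪z, Gu x⟫ - u z : ℝ)) : EReal)) x)
    rw [EReal.coe_le_coe_iff]
    have h1 := grad_subgrad hu hx z
    have h2 : ⟪Gu x, z - x⟫ = ⟪Gu x, z⟫ - ⟪Gu x, x⟫ := inner_sub_right _ _ _
    have h3 : ⟪z, Gu x⟫ = ⟪Gu x, z⟫ := real_inner_comm _ _
    have h4 : ⟪x, Gu x⟫ = ⟪Gu x, x⟫ := real_inner_comm _ _
    linarith
  have hV2 : ∀ᵐ x ∂μ, vs (Gv x) = ((⟪x, Gv x⟫ - v x : ℝ) : EReal) := by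
    filter_upwards [hGv] with x hx
    simp only [hvs_def]
    refine le_antisymm (iSup_le fun z => ?_)
      (le_iSup (fun z => (((⟪z, Gv x⟫ - v z : ℝ)) : EReal)) x)
    rw [EReal.coe_le_coe_iff]
    have h1 := grad_subgrad hv hx z
    have h2 : ⟪Gv x, z - x⟫ = ⟪Gv x, z⟫ - ⟪Gv x, x⟫ := inner_sub_right _ _ _
    have h3 : ⟪z, Gv x⟫ = ⟪Gv x, z⟫ := real_inner_comm _ _
    have h4 : ⟪x, Gv x⟫ = ⟪Gv x, x⟫ := real_inner_comm _ _
    linarith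
  -- top sets are null
  have hustop_m : MeasurableSet {y | us y = ⊤} := hus_meas (measurableSet_singleton ⊤)
  have hvstop_m : MeasurableSet {y | vs y = ⊤} := hvs_meas (measurableSet_singleton ⊤)
  have hmap : ∀ (G : EuclideanSpace ℝ (Fin n) → EuclideanSpace ℝ (Fin n)),
      AEMeasurable G μ → Measure.map G μ = ν →
      ∀ s : Set (EuclideanSpace ℝ (Fin n)), MeasurableSet s →
      μ {x | G x ∈ s} = ν s := by
    intro G hGm hGp s hs
    rw [← hGp, Measure.map_apply_of_aemeasurable hGm hs]
    rfl
  have hnu_utop : ν {y | us y = ⊤} = 0 := by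
    rw [← hmap Gu hGum hpushu _ hustop_m]
    have : ∀ᵐ x ∂μ, ¬ (Gu x ∈ {y | us y = ⊤}) := by
      filter_upwards [hU1] with x hx
      simp only [Set.mem_setOf_eq, hx]
      exact EReal.coe_ne_top _
    simpa [ae_iff] using this
  have hnu_vtop : ν {y | vs y = ⊤} = 0 := by
    rw [← hmap Gv hGvm hpushv _ hvstop_m]
    have : ∀ᵐ x ∂μ, ¬ (Gv x ∈ {y | vs y = ⊤}) := by
      filter_upwards [hV2] with x hx
      simp only [Set.mem_setOf_eq, hx]
      exact EReal.coe_ne_top _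
    simpa [ae_iff] using this
  have hUtopGv : ∀ᵐ x ∂μ, us (Gv x) ≠ ⊤ := by
    have h0 : μ {x | Gv x ∈ {y | us y = ⊤}} = 0 := by
      rw [hmap Gv hGvm hpushv _ hustop_m]; exact hnu_utop
    rw [ae_iff]
    simpa using h0
  have hVtopGu : ∀ᵐ x ∂μ, vs (Gu x) ≠ ⊤ := by
    have h0 : μ {x | Gu x ∈ {y | vs y = ⊤}} = 0 := by
      rw [hmap Gu hGum hpushu _ hvstop_m]; exact hnu_vtop
    rw [ae_iff]
    simpa using h0
  -- the real-valued comparison function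
  set h : EuclideanSpace ℝ (Fin n) → ℝ := fun y => (us y).toReal - (vs y).toReal with hh_def
  have hh_meas : Measurable h := hus_meas.ereal_toReal.sub hvs_meas.ereal_toReal
  -- a.e. chain of inequalities
  have hle : ∀ᵐ x ∂μ, h (Gu x) ≤ v x - u x ∧ v x - u x ≤ h (Gv x) := by
    filter_upwards [hU1, hV2, hUtopGv, hVtopGu] with x h1 h2 h3 h4
    constructor
    · have hv_ge : ((⟪x, Gu x⟫ - v x : ℝ) : EReal) ≤ vs (Gu x) := fen_v (Gu x) x
      have hv_ge' : ⟪x, Gu x⟫ - v x ≤ (vs (Gu x)).toReal := by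
        rw [← EReal.coe_toReal h4 (hbot_v _)] at hv_ge
        exact EReal.coe_le_coe_iff.1 hv_ge
      have hu_eq : (us (Gu x)).toReal = ⟪x, Gu x⟫ - u x := by
        rw [h1, EReal.toReal_coe]
      simp only [hh_def, hu_eq]
      linarith
    · have hu_ge : ((⟪x, Gv x⟫ - u x : ℝ) : EReal) ≤ us (Gv x) := fen_u (Gv x) x
      have hu_ge' : ⟪x, Gv x⟫ - u x ≤ (us (Gv x)).toReal := by
        rw [← EReal.coe_toReal h3 (hbot_u _)] at hu_ge
        exact EReal.coe_le_coe_iff.1 hu_ge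
      have hv_eq : (vs (Gv x)).toReal = ⟪x, Gv x⟫ - v x := by
        rw [h2, EReal.toReal_coe]
      simp only [hh_def, hv_eq]
      linarith
  -- equal upper tails, hence a.e. equality
  have htails : ∀ t : ℝ, μ {x | t < h (Gu x)} = μ {x | t < h (Gv x)} := by
    intro t
    have hs : MeasurableSet {y | t < h y} := measurableSet_lt measurable_const hh_meas
    have e1 : μ {x | Gu x ∈ {y | t < h y}} = ν {y | t < h y} := hmap Gu hGum hpushu _ hs
    have e2 : μ {x | Gv x ∈ {y | t < h y}} = ν {y | t < h y} := hmap Gv hGvm hpushv _ hs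
    exact e1.trans e2.symm
  have hXY : (fun x => h (Gu x)) =ᵐ[μ] fun x => h (Gv x) := by
    refine ae_eq_of_ae_le_of_tail_eq (hh_meas.comp_aemeasurable hGum)
      (hh_meas.comp_aemeasurable hGvm) ?_ htails
    filter_upwards [hle] with x hx
    exact hx.1.trans hx.2
  -- conclusion
  filter_upwards [hXY, hle, hV2, hUtopGv, hGu] with x hxy hch h2 htop hgrad
  have hhv : h (Gv x) = v x - u x := le_antisymm (hxy ▸ hch.1) hch.2
  have hv_eq : (vs (Gv x)).toReal = ⟪x, Gv x⟫ - v x := by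
    rw [h2, EReal.toReal_coe]
  have hus_toReal : (us (Gv x)).toReal = ⟪x, Gv x⟫ - u x := by
    have : (us (Gv x)).toReal - (vs (Gv x)).toReal = v x - u x := hhv
    rw [hv_eq] at this
    linarith
  have hus_eq : us (Gv x) = ((⟪x, Gv x⟫ - u x : ℝ) : EReal) := by
    rw [← hus_toReal]
    exact (EReal.coe_toReal htop (hbot_u _)).symm
  have hsub : ∀ z, u x + ⟪Gv x, z - x⟫ ≤ u z := by
    intro z
    have := (fen_u (Gv x) z).trans_eq hus_eq
    rw [EReal.coe_le_coe_iff] at this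
    have h2' : ⟪Gv x, z - x⟫ = ⟪Gv x, z⟫ - ⟪Gv x, x⟫ := inner_sub_right _ _ _
    have h3 : ⟪z, Gv x⟫ = ⟪Gv x, z⟫ := real_inner_comm _ _
    have h4 : ⟪x, Gv x⟫ = ⟪Gv x, x⟫ := real_inner_comm _ _
    linarith
  exact (subgrad_eq_grad hgrad hsub).symm
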